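/- Let y ∈ ℂ[x] be a monic squarefree polynomial of degree l with roots t_1,…,t_l, let h ∈ ℂ be such that y(x) and y(x+h) have no common roots, and let R ∈ ℂ[x] with gcd(R, y) = 1 and gcd(R(x), y(x+h)) having no roots at the roots of y shifted. Then there exists a polynomial ỹ ∈ ℂ[x] with y(x+h)ỹ(x) − y(x)ỹ(x+h) = R(x) if and only if for each j = 1,…,l: R(t_j)/(y'(t_j) y(t_j+h)) + R(t_j−h)/(y'(t_j) y(t_j−h)) = 0, i.e. R(t_j)·y(t_j−h) + R(t_j−h)·y(t_j+h) = 0. -/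

import Mathlib

open Polynomial

lemma exists_diff_eq (h : ℂ) (hh : h ≠ 0) (P : ℂ[X]) :
    ∃ q : ℂ[X], q - q.comp (X + C h) = P := by
  suffices H : ∀ n (P : ℂ[X]), P.natDegree ≤ n → ∃ q : ℂ[X], q - q.comp (X + C h) = P from
    H P.natDegree P le_rfl
  intro n
  induction n with
  | zero =>
    intro P hP
    refine ⟨C (-(P.coeff 0)/h) * X, ?_⟩
    conv_rhs => rw [eq_C_of_natDegree_le_zero hP]
    rw [mul_comp, C_comp, X_comp,
      show C (-P.coeff 0 / h) * X - C (-P.coeff 0 / h) * (X + C h)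
        = C (-(-P.coeff 0 / h * h)) by rw [C_neg, C_mul]; ring]
    congr 1
    field_simp
  | succ n ih =>
    intro P hP
    set c : ℂ := P.coeff (n+1) with hc
    set a : ℂ := -c / (((n:ℂ)+2) * h) with ha
    set q₁ : ℂ[X] := C a * X^(n+2) with hq₁
    have hcoeff : ∀ k, (q₁ - q₁.comp (X + C h)).coeff k
        = a * ((if k = n+2 then 1 else 0) - h ^ (n+2-k) * ((n+2).choose k : ℂ)) := by
      intro k
      rw [hq₁, coeff_sub, mul_comp, C_comp, pow_comp, X_comp,
        coeff_C_mul, coeff_C_mul, coeff_X_pow, coeff_X_add_C_pow]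
      ring
    have hkey : a * (0 - h ^ (n+2-(n+1)) * ((n+2).choose (n+1) : ℂ)) = c := by
      have : (n+2).choose (n+1) = n+2 := Nat.choose_succ_self_right (n+1)
      rw [this, show n+2-(n+1) = 1 by omega, pow_one, ha]
      have h2 : ((n:ℂ)+2) ≠ 0 := by
        have : ((n+2 : ℕ) : ℂ) ≠ 0 := Nat.cast_ne_zero.mpr (by omega)
        exact_mod_cast this
      have hne : ((n:ℂ)+2)*h ≠ 0 := mul_ne_zero h2 hh
      push_cast
      field_simp
      ring
    set P' : ℂ[X] := P - (q₁ - q₁.comp (X + C h)) with hP'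
    have hd : P'.natDegree ≤ n := by
      rw [natDegree_le_iff_coeff_eq_zero]
      intro N hN
      rw [hP', coeff_sub, hcoeff]
      rcases eq_or_lt_of_le (Nat.succ_le_of_lt hN) with hNe | hNlt
      · rw [← hNe]
        rw [if_neg (by omega)]
        rw [← hc] at *
        rw [hkey]
        ring
      · have hPN : P.coeff N = 0 := natDegree_le_iff_coeff_eq_zero.mp hP N (by omega)
        rcases eq_or_lt_of_le (Nat.succ_le_of_lt hNlt) with hNe2 | hNlt2
        · rw [hPN, ← hNe2, if_pos rfl, show n+2-(n+2) = 0 by omega, pow_zero,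
            Nat.choose_self]
          push_cast; ring
        · rw [hPN, if_neg (by omega), Nat.choose_eq_zero_of_lt (by omega)]
          push_cast; ring
    obtain ⟨q₂, hq₂⟩ := ih P' hd
    refine ⟨q₁ + q₂, ?_⟩
    rw [add_comp]
    have : P = P' + (q₁ - q₁.comp (X + C h)) := by rw [hP']; ring
    rw [this, ← hq₂]; ring

/-- Existence of a polynomial solution of the discrete Wronskian equation is
equivalent to the residue conditions at the roots of `y`. -/
theorem wronskian_solvability_iff_residues (l : ℕ) (t : Fin l → ℂ)
    (ht : Function.Injective t) (h : ℂ) (hh : h ≠ 0)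
    (y : ℂ[X]) (hy : y = ∏ j, (X - C (t j)))
    (hnc : ∀ j k, t j ≠ t k + h)
    (R : ℂ[X]) (hco : IsCoprime R y)
    (hco' : ∀ j, R.eval (t j - h) ≠ 0 ∨ y.eval (t j - h) ≠ 0) :
    (∃ yt : ℂ[X], y.comp (X + C h) * yt - y * yt.comp (X + C h) = R) ↔
      ∀ j, R.eval (t j) * y.eval (t j - h) + R.eval (t j - h) * y.eval (t j + h) = 0 := by
  classical
  have hyeval : ∀ x : ℂ, y.eval x = ∏ k, (x - t k) := by
    intro x; rw [hy, eval_prod]; simp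
  have hyroot : ∀ j, y.eval (t j) = 0 := fun j => by
    rw [hyeval]; exact Finset.prod_eq_zero (Finset.mem_univ j) (by ring)
  have hyp : ∀ j, y.eval (t j + h) ≠ 0 := fun j => by
    rw [hyeval]
    exact Finset.prod_ne_zero_iff.mpr fun k _ => sub_ne_zero_of_ne (Ne.symm (hnc k j))
  have hym : ∀ j, y.eval (t j - h) ≠ 0 := fun j => by
    rw [hyeval]
    refine Finset.prod_ne_zero_iff.mpr fun k _ => sub_ne_zero_of_ne fun e => hnc j k ?_
    rw [← e]; ring
  constructor
  · rintro ⟨yt, heq⟩ j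
    have e1 := congrArg (eval (t j)) heq
    have e2 := congrArg (eval (t j - h)) heq
    simp only [eval_sub, eval_mul, eval_comp, eval_add, eval_X, eval_C] at e1 e2
    rw [show t j - h + h = t j by ring] at e2
    rw [hyroot j] at e1 e2
    linear_combination (-(y.eval (t j - h))) * e1 + (-(y.eval (t j + h))) * e2
  · intro hres
    set u : Fin l → ℂ[X] := fun j => ∏ k ∈ Finset.univ.erase j, (X - C (t k)) with hu
    have hueval : ∀ j x, (u j).eval x = ∏ k ∈ Finset.univ.erase j, (x - t k) := by
      intro j x; rw [hu, eval_prod]; simp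
    have huj : ∀ j, (u j).eval (t j) ≠ 0 := fun j => by
      rw [hueval]
      exact Finset.prod_ne_zero_iff.mpr fun k hk =>
        sub_ne_zero_of_ne fun e => (Finset.mem_erase.mp hk).1 (ht e.symm)
    have hui : ∀ i j, i ≠ j → (u j).eval (t i) = 0 := fun i j hij => by
      rw [hueval]
      exact Finset.prod_eq_zero (Finset.mem_erase.mpr ⟨hij, Finset.mem_univ i⟩) (by ring)
    set a : Fin l → ℂ := fun j => R.eval (t j) / ((u j).eval (t j) * y.eval (t j + h)) with haa
    set y0 : ℂ[X] := ∑ j, C (a j) * u j with hy0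
    have hy0eval : ∀ i, y0.eval (t i) = a i * (u i).eval (t i) := by
      intro i
      rw [hy0, eval_finset_sum, Finset.sum_eq_single i]
      · simp
      · intro j _ hji
        simp [hui i j (fun e => hji e.symm)]
      · simp
    set R0 : ℂ[X] := y.comp (X + C h) * y0 - y * y0.comp (X + C h) with hR0
    have hR0i : ∀ i, R0.eval (t i) = R.eval (t i) := by
      intro i
      rw [hR0]
      simp only [eval_sub, eval_mul, eval_comp, eval_add, eval_X, eval_C]
      rw [hyroot i, hy0eval i, haa]
      have h1 := huj i
      have h2 := hyp i
      field_simp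
      ring
    have hR0i' : ∀ i, R0.eval (t i - h) = R.eval (t i - h) := by
      intro i
      rw [hR0]
      simp only [eval_sub, eval_mul, eval_comp, eval_add, eval_X, eval_C]
      rw [show t i - h + h = t i by ring, hyroot i, hy0eval i, haa]
      have h1 := huj i
      have h2 := hyp i
      have h3 := hres i
      field_simp
      linear_combination (-1 : ℂ) * h3
    have hcomp : y.comp (X + C h) = ∏ j, (X - C (t j - h)) := by
      rw [hy, prod_comp]
      refine Finset.prod_congr rfl fun j _ => ?_
      rw [sub_comp, X_comp, C_comp, C_sub]; ring
    set g : Fin l ⊕ Fin l → ℂ := Sum.elim t (fun j => t j - h) with hg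
    have hginj : Function.Injective g := by
      rintro (i | i) (j | j) e <;> simp only [hg, Sum.elim_inl, Sum.elim_inr] at e
      · exact congrArg Sum.inl (ht e)
      · exact absurd (show t j = t i + h by linear_combination -e) (hnc j i)
      · exact absurd (show t i = t j + h by linear_combination e) (hnc i j)
      · exact congrArg Sum.inr (ht (by linear_combination e))
    have hprod : y * y.comp (X + C h) = ∏ i : Fin l ⊕ Fin l, (X - C (g i)) := by
      rw [Fintype.prod_sum_type]
      simp only [hg, Sum.elim_inl, Sum.elim_inr]
      rw [← hy, ← hcomp]
    have hdvd : y * y.comp (X + C h) ∣ R - R0 := by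
      rw [hprod]
      refine Fintype.prod_dvd_of_coprime (pairwise_coprime_X_sub_C hginj) fun i => ?_
      rw [dvd_iff_isRoot]
      rcases i with j | j
      · simp only [IsRoot, hg, Sum.elim_inl, eval_sub, hR0i j, sub_self]
      · simp only [IsRoot, hg, Sum.elim_inr, eval_sub, hR0i' j, sub_self]
    obtain ⟨P, hP⟩ := hdvd
    obtain ⟨q, hq⟩ := exists_diff_eq h hh P
    refine ⟨y0 + y * q, ?_⟩
    rw [add_comp, mul_comp]
    linear_combination (-1 : ℂ[X]) * hP + y * y.comp (X + C h) * hq - hR0
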